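/- Let n be a unit vector in ℝ^K with all components n_k > η > 0, and let V = {v ∈ ℝ^K : v·n = 0} be the hyperplane through the origin with normal n. Then for all r, r' ∈ V, the Pareto distance satisfies d(r,r') = max_k (r_k − r'_k) ≥ (η/(K(1+η))) ||r − r'||_2. -/

import Mathlib

/-- On a linear Pareto front `V = {v : v ⬝ n = 0}` with unit normal `n`
whose coordinates all exceed `η > 0`, the Pareto distance dominates a multiple of the
Euclidean distance: `max_k (r_k - r'_k) ≥ (η/(K(1+η))) ‖r - r'‖₂`. -/
theorem pareto_distance_lower_bound_linear_front {K : ℕ} (hK : 0 < K)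
    (η : ℝ) (hη : 0 < η)
    (n : EuclideanSpace ℝ (Fin K)) (hn : ‖n‖ = 1) (hnk : ∀ k, η < n k)
    (r r' : EuclideanSpace ℝ (Fin K))
    (hr : inner ℝ r n = (0:ℝ)) (hr' : inner ℝ r' n = (0:ℝ)) :
    (η / (K * (1 + η))) * ‖r - r'‖ ≤
      Finset.univ.sup' (Finset.univ_nonempty_iff.mpr ⟨⟨0, hK⟩⟩)
        (fun k => r k - r' k) := by
  have hne : (Finset.univ : Finset (Fin K)).Nonempty :=
    Finset.univ_nonempty_iff.mpr ⟨⟨0, hK⟩⟩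
  set v : Fin K → ℝ := fun k => r k - r' k with hv
  set M := Finset.univ.sup' hne v with hMdef
  have hinner : ∑ k, v k * n k = 0 := by
    have h1 : inner ℝ (r - r') n = (0:ℝ) := by
      rw [inner_sub_left, hr, hr']; ring
    rw [PiLp.inner_apply] at h1
    simpa [v, RCLike.inner_apply, sub_mul, mul_comm] using h1
  have hnn : ∑ i, (n i)^2 = 1 := by
    have h := real_inner_self_eq_norm_sq n
    rw [hn, PiLp.inner_apply] at h
    simpa [RCLike.inner_apply, sq] using h
  have hn1 : ∀ k, n k ≤ 1 := by
    intro k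
    have h2 : (n k)^2 ≤ 1 := by
      rw [← hnn]
      exact Finset.single_le_sum (fun i _ => sq_nonneg (n i)) (Finset.mem_univ k)
    have := (sq_le_one_iff_abs_le_one (a := n k)).mp h2
    exact le_trans (le_abs_self _) this
  -- ℓ2 ≤ ℓ1
  have hl1 : ‖r - r'‖ ≤ ∑ k, |v k| := by
    rw [EuclideanSpace.norm_eq]
    have hsq : ∑ i, ‖(r - r') i‖^2 ≤ (∑ k, |v k|)^2 := by
      have h := Finset.sum_sq_le_sq_sum_of_nonneg
        (s := Finset.univ) (f := fun k => |v k|) (fun i _ => abs_nonneg _)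
      simpa [Real.norm_eq_abs, sq_abs, v] using h
    calc Real.sqrt (∑ i, ‖(r - r') i‖^2) ≤ Real.sqrt ((∑ k, |v k|)^2) :=
          Real.sqrt_le_sqrt hsq
      _ = ∑ k, |v k| := Real.sqrt_sq (Finset.sum_nonneg fun i _ => abs_nonneg _)
  have hMle : ∀ k, v k ≤ M := fun k => Finset.le_sup' v (Finset.mem_univ k)
  have hM0 : 0 ≤ M := by
    by_contra h
    push_neg at h
    have hneg : ∑ k, v k * n k < 0 := by
      apply Finset.sum_neg (fun k _ => ?_) hne
      exact mul_neg_of_neg_of_pos (lt_of_le_of_lt (hMle k) h) (hη.trans (hnk k))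
    exact absurd hinner (ne_of_lt hneg)
  set P := ∑ k, max (v k) 0 with hPdef
  set N := ∑ k, max (-(v k)) 0 with hNdef
  have hPN : ∑ k, max (-(v k)) 0 * n k = ∑ k, max (v k) 0 * n k := by
    have h2 : ∑ k, (max (v k) 0 * n k - max (-(v k)) 0 * n k) = 0 := by
      calc ∑ k, (max (v k) 0 * n k - max (-(v k)) 0 * n k)
          = ∑ k, v k * n k := by
            refine Finset.sum_congr rfl fun k _ => ?_
            rw [← sub_mul, max_zero_sub_max_neg_zero_eq_self]
        _ = 0 := hinner
    rw [Finset.sum_sub_distrib] at h2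
    linarith
  have hNP : η * N ≤ P := by
    have h1 : η * N ≤ ∑ k, max (-(v k)) 0 * n k := by
      rw [hNdef, Finset.mul_sum]
      apply Finset.sum_le_sum
      intro k _
      rw [mul_comm]
      exact mul_le_mul_of_nonneg_left (le_of_lt (hnk k)) (le_max_right _ _)
    have h2 : ∑ k, max (v k) 0 * n k ≤ P := by
      rw [hPdef]
      apply Finset.sum_le_sum
      intro k _
      calc max (v k) 0 * n k ≤ max (v k) 0 * 1 :=
            mul_le_mul_of_nonneg_left (hn1 k) (le_max_right _ _)
        _ = max (v k) 0 := mul_one _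
    linarith [hPN]
  have hPM : P ≤ K * M := by
    calc P ≤ ∑ _k : Fin K, M := Finset.sum_le_sum fun k _ => max_le (hMle k) hM0
      _ = K * M := by simp [Finset.sum_const, nsmul_eq_mul]
  have hl1' : ∑ k, |v k| = P + N := by
    rw [hPdef, hNdef, ← Finset.sum_add_distrib]
    exact Finset.sum_congr rfl fun k _ =>
      (max_zero_add_max_neg_zero_eq_abs_self (v k)).symm
  have hK' : (0:ℝ) < K := by exact_mod_cast hK
  have hnorm : ‖r - r'‖ ≤ K * M + K * M / η := by
    have hNb : N ≤ K * M / η := by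
      rw [le_div_iff₀ hη]; nlinarith
    calc ‖r - r'‖ ≤ ∑ k, |v k| := hl1
      _ = P + N := hl1'
      _ ≤ K * M + K * M / η := add_le_add hPM hNb
  have hcpos : 0 < η / (K * (1 + η)) := by positivity
  have := mul_le_mul_of_nonneg_left hnorm hcpos.le
  have heq : η / (K * (1 + η)) * (K * M + K * M / η) = M := by
    field_simp
    ring
  rw [heq] at this
  exact this
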